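/- arXiv:2002.07275 — 2 statements merged into one kernel-verified Lean document; each statement's English description precedes it below -/
import Mathlib

section
/- Let G be a group of order d acting edge-freely on a finite graph Y with quotient graph of groups 𝕏, and let 𝔮 be a prime of 𝕏. Then G acts transitively on the primes of Y lying over 𝔮, and the number of such primes is d/f(𝔮), where f(𝔮) is the order of the Frobenius element of any representative of 𝔮. -/
structure LegGraph where
  V : Type
  H : Type
  [fV : Fintype V]
  [fH : Fintype H]
  [dV : DecidableEq V]
  [dH : DecidableEq H]
  r : H → V
  bar : H → H
  bar_bar : ∀ h, bar (bar h) = h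

attribute [instance] LegGraph.fV LegGraph.fH LegGraph.dV LegGraph.dH

namespace LegGraph

def IsClosedPath (X : LegGraph) {n : ℕ} (h : ZMod n → X.H) : Prop :=
  ∀ j, X.r (h (j + 1)) = X.r (X.bar (h j))

def IsReducedPath (X : LegGraph) {n : ℕ} (h : ZMod n → X.H) : Prop :=
  ∀ j, h (j + 1) ≠ X.bar (h j)

def HasPeriod (X : LegGraph) {n : ℕ} (h : ZMod n → X.H) (d : ℕ) : Prop :=
  ∀ j, h (j + (d : ZMod n)) = h j

def IsPrimitive (X : LegGraph) {n : ℕ} (h : ZMod n → X.H) : Prop :=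
  ∀ d : ℕ, 0 < d → d ∣ n → X.HasPeriod h d → d = n

end LegGraph

/-- An edge-free Galois covering of graphs with legs: a group `G` acting on a finite
graph `Y`, freely on half-edges, together with the quotient graph `X = Y/G`, a lifted
spanning tree (recorded via the vertex section `vT`), a choice of identity sheet
(recorded via the half-edge section `sec`) and the Frobenius elements `F(h)`, as in
the construction of the quotient graph of groups `𝕏 = Y ⫽ G`. -/
structure EdgeFreeCover where
  Y : LegGraph
  G : Type
  [grpG : Group G]
  [finG : Fintype G]
  [decG : DecidableEq G]
  act : G → Y.H → Y.H
  actV : G → Y.V → Y.V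
  act_one : ∀ h, act 1 h = h
  act_mul : ∀ g g' h, act (g * g') h = act g (act g' h)
  actV_one : ∀ v, actV 1 v = v
  actV_mul : ∀ g g' v, actV (g * g') v = actV g (actV g' v)
  act_r : ∀ g h, Y.r (act g h) = actV g (Y.r h)
  act_bar : ∀ g h, Y.bar (act g h) = act g (Y.bar h)
  free : ∀ g h, act g h = h → g = 1
  X : LegGraph
  πV : Y.V → X.V
  πH : Y.H → X.H
  πV_surj : Function.Surjective πV
  πH_r : ∀ f, X.r (πH f) = πV (Y.r f)
  πH_bar : ∀ f, X.bar (πH f) = πH (Y.bar f)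
  πH_eq : ∀ f f', πH f = πH f' ↔ ∃ g, act g f = f'
  πV_eq : ∀ v v', πV v = πV v' ↔ ∃ g, actV g v = v'
  vT : X.V → Y.V
  vT_sec : ∀ v, πV (vT v) = v
  sec : X.H → Y.H
  sec_sec : ∀ h, πH (sec h) = h
  sec_root : ∀ h, Y.r (sec h) = vT (X.r h)
  F : X.H → G
  F_bar : ∀ h, F (X.bar h) = (F h)⁻¹
  F_spec : ∀ h, act (F h) (sec (X.bar h)) = Y.bar (sec h)

attribute [instance] EdgeFreeCover.grpG EdgeFreeCover.finG EdgeFreeCover.decG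

namespace EdgeFreeCover

variable (E : EdgeFreeCover)

/-- The sheet number `N(f)` of a half-edge `f` of `Y`: the unique `g ∈ G` with
`g · (π f)^S = f`. -/
noncomputable def N (f : E.Y.H) : E.G :=
  Classical.choose ((E.πH_eq (E.sec (E.πH f)) f).mp (E.sec_sec (E.πH f)))

/-- Membership in the vertex group `X_v` of the quotient graph of groups:
the stabilizer of the chosen lift `v^T`. -/
def InStab (v : E.X.V) (g : E.G) : Prop := E.actV g (E.vT v) = E.vT v

/-- A closed path of length `n` in the quotient graph of groups `𝕏 = Y ⫽ G`,
recorded cyclically: half-edges `h j` and group elements `γ j` (with `γ j` the group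
element immediately preceding `h j`), each lying in the vertex group at the root of
`h j`. -/
def IsClosedGPath {n : ℕ} (h : ZMod n → E.X.H) (γ : ZMod n → E.G) : Prop :=
  E.X.IsClosedPath h ∧ ∀ j, E.InStab (E.X.r (h j)) (γ j)

/-- The path `g₀h₁g₁⋯g_{n-1}h_n` is reduced if for every `j` either `h_{j+1} ≠ h̄_j`
or the intervening group element is nontrivial. -/
def IsReducedGPath {n : ℕ} (h : ZMod n → E.X.H) (γ : ZMod n → E.G) : Prop :=
  ∀ j, h (j + 1) ≠ E.X.bar (h j) ∨ γ (j + 1) ≠ 1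

/-- A closed path in `𝕏` has period `d` if it is invariant under rotation by `d`. -/
def GPathHasPeriod {n : ℕ} (h : ZMod n → E.X.H) (γ : ZMod n → E.G) (d : ℕ) : Prop :=
  ∀ j, h (j + (d : ZMod n)) = h j ∧ γ (j + (d : ZMod n)) = γ j

/-- A closed path in `𝕏` is primitive if it is not a proper power. -/
def GPathIsPrimitive {n : ℕ} (h : ZMod n → E.X.H) (γ : ZMod n → E.G) : Prop :=
  ∀ d : ℕ, 0 < d → d ∣ n → E.GPathHasPeriod h γ d → d = n

/-- The Frobenius element `F(P) = g₀F(h₁)g₁F(h₂)⋯g_{n-1}F(h_n)` of a closed path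
in `𝕏` (with chosen basepoint). -/
def Frob {n : ℕ} (h : ZMod n → E.X.H) (γ : ZMod n → E.G) : E.G :=
  (((List.range n).map fun i => γ (i : ZMod n) * E.F (h (i : ZMod n)))).prod

/-- The lift `π⁻¹(Q, s)` of a closed path `Q` in `𝕏` starting on the `s`-th sheet:
its `j`-th half-edge is `s · F(g₀h₁⋯h_j g_j) · h_{j+1}^S`. -/
def liftPath {n : ℕ} (h : ZMod n → E.X.H) (γ : ZMod n → E.G) (s : E.G)
    (j : ZMod n) : E.Y.H :=
  E.act (s * (((List.range j.val).map fun i => γ (i : ZMod n) * E.F (h (i : ZMod n)))).prod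
      * γ j) (E.sec (h j))

/-- The half-edge components of the image `π(P)` of a closed path `P` in `Y`. -/
def imgH {n : ℕ} (f : ZMod n → E.Y.H) (j : ZMod n) : E.X.H := E.πH (f j)

/-- The group components of the image `π(P)` of a closed path `P` in `Y`:
`g_j = F(h_j)⁻¹ N(f_j)⁻¹ N(f_{j+1})` (cyclically, with `g₀ = F(h_n)⁻¹N(f_n)⁻¹N(f₁)`). -/
noncomputable def imgG {n : ℕ} (f : ZMod n → E.Y.H) (j : ZMod n) : E.G :=
  (E.F (E.πH (f (j - 1))))⁻¹ * (E.N (f (j - 1)))⁻¹ * E.N (f j)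

end EdgeFreeCover

/-- A primitive closed reduced path `P` of length `n` in `Y` lies over the prime of
`𝕏` represented by `Q = (h, γ)` of length `m ∣ n` if the image `π(P)` equals `R^(n/m)`
for some rotation `R` of `Q`. -/
def LiesOver (E : EdgeFreeCover) {n m : ℕ} (hdvd : m ∣ n)
    (P : ZMod n → E.Y.H) (h : ZMod m → E.X.H) (γ : ZMod m → E.G) : Prop :=
  ∃ t : ZMod m, ∀ j : ZMod n,
    E.imgH P j = h (ZMod.castHom hdvd (ZMod m) j + t) ∧
    E.imgG P j = γ (ZMod.castHom hdvd (ZMod m) j + t)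


/-! ### Auxiliary development -/

section AuxGeneral

/-- Induction over `ZMod n`. -/
lemma zmod_ind {n : ℕ} [NeZero n] {p : ZMod n → Prop} (h0 : p 0)
    (hstep : ∀ j : ZMod n, p j → p (j + 1)) : ∀ j, p j := by
  have key : ∀ k : ℕ, p (k : ZMod n) := by
    intro k
    induction k with
    | zero => simpa using h0
    | succ k ih =>
      have h2 := hstep _ ih
      have h3 : ((k : ZMod n) + 1) = ((k + 1 : ℕ) : ZMod n) := by push_cast; ring
      rwa [h3] at h2
  intro j
  have hj := key j.val
  rwa [ZMod.natCast_rightInverse j] at hj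

/-- The subgroup of periods of a function on `ZMod k`. -/
def periodSubgroup {α : Type*} {k : ℕ} (p : ZMod k → α) : AddSubgroup (ZMod k) where
  carrier := {x | ∀ j, p (j + x) = p j}
  zero_mem' := fun j => by rw [add_zero]
  add_mem' := by
    intro a b ha hb j
    rw [← add_assoc, hb, ha]
  neg_mem' := by
    intro a ha j
    have h1 := ha (j + -a)
    rw [add_assoc, neg_add_cancel, add_zero] at h1
    exact h1.symm

lemma period_gcd {α : Type*} {k : ℕ} [NeZero k] (p : ZMod k → α) (x : ZMod k)
    (hx : ∀ j, p (j + x) = p j) :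
    ∀ j, p (j + (Nat.gcd x.val k : ZMod k)) = p j := by
  have hmem : x ∈ periodSubgroup p := hx
  have h2 : (Nat.gcd x.val k : ZMod k) = (Nat.gcdA x.val k : ℤ) • x := by
    have h4 : ((Nat.gcd x.val k : ℤ) : ZMod k)
        = (((x.val : ℤ) * Nat.gcdA x.val k + (k : ℤ) * Nat.gcdB x.val k : ℤ) : ZMod k) := by
      rw [← Nat.gcd_eq_gcd_ab x.val k]
    push_cast at h4
    rw [ZMod.natCast_self, zero_mul, add_zero, ZMod.natCast_rightInverse x] at h4
    rw [zsmul_eq_mul, h4]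
    ring
  have h5 := AddSubgroup.zsmul_mem (periodSubgroup p) hmem (Nat.gcdA x.val k)
  rw [← h2] at h5
  exact h5

lemma eq_zero_of_period {α : Type*} {k : ℕ} (hk : 0 < k) (p : ZMod k → α)
    (hprim : ∀ d : ℕ, 0 < d → d ∣ k → (∀ j, p (j + (d : ZMod k)) = p j) → d = k)
    (x : ZMod k) (hx : ∀ j, p (j + x) = p j) : x = 0 := by
  haveI : NeZero k := ⟨hk.ne'⟩
  by_contra hx0
  have h1 := period_gcd p x hx
  have hg : Nat.gcd x.val k = k :=
    hprim _ (Nat.gcd_pos_of_pos_right _ hk) (Nat.gcd_dvd_right _ _) h1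
  have hvlt : x.val < k := ZMod.val_lt x
  have hvpos : 0 < x.val := by
    rcases Nat.eq_zero_or_pos x.val with h0 | h0
    · exact absurd ((ZMod.val_eq_zero x).mp h0) hx0
    · exact h0
  have h6 := Nat.le_of_dvd hvpos (Nat.gcd_dvd_left x.val k)
  omega

lemma orderOf_conj {G : Type*} [Group G] (a g : G) : orderOf (g⁻¹ * a * g) = orderOf a := by
  have hsemi : SemiconjBy g⁻¹ a (g⁻¹ * a * g) := by
    show g⁻¹ * a = (g⁻¹ * a * g) * g⁻¹
    group
  exact (SemiconjBy.orderOf_eq _ hsemi).symm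

/-- Counting the quotient of a set of "paths" by the free rotation action. -/
lemma card_quot_rot {β : Type} {n : ℕ} (hn0 : 0 < n)
    (S : (ZMod n → β) → Prop)
    (hrot : ∀ P τ, S P → S (fun j => P (j + τ)))
    (hfree : ∀ P, S P → ∀ x : ZMod n, (∀ j, P (j + x) = P j) → x = 0) :
    Nat.card (Quot (fun (P P' : {P : ZMod n → β // S P}) =>
        ∃ t : ZMod n, ∀ j, P'.1 j = P.1 (j + t))) * n
      = Nat.card {P : ZMod n → β // S P} := by
  classical
  haveI : NeZero n := ⟨hn0.ne'⟩
  set A := {P : ZMod n → β // S P} with hA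
  set R : A → A → Prop := fun P P' => ∃ t : ZMod n, ∀ j, P'.1 j = P.1 (j + t) with hR
  have hEquiv : Equivalence R := by
    constructor
    · intro P; exact ⟨0, fun j => by rw [add_zero]⟩
    · rintro P P' ⟨τ, hτ⟩
      refine ⟨-τ, fun j => ?_⟩
      have h1 := hτ (j + -τ)
      rw [show j + -τ + τ = j by ring] at h1
      exact h1.symm
    · rintro P P' P'' ⟨τ, hτ⟩ ⟨σ, hσ⟩
      refine ⟨σ + τ, fun j => ?_⟩
      rw [hσ j, hτ (j + σ), show j + σ + τ = j + (σ + τ) by ring]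
  have fib : ∀ q : Quot R, {P : A // Quot.mk R P = q} ≃ ZMod n := by
    intro q
    have hmk : Quot.mk R q.out = q := Quot.out_eq q
    have hmem : ∀ τ : ZMod n, Quot.mk R (⟨fun j => q.out.1 (j + τ), hrot q.out.1 τ q.out.2⟩ : A) = q := by
      intro τ
      have hr : R q.out ⟨fun j => q.out.1 (j + τ), hrot q.out.1 τ q.out.2⟩ := ⟨τ, fun j => rfl⟩
      exact (Quot.sound hr).symm.trans hmk
    refine (Equiv.ofBijective
      (fun τ : ZMod n => (⟨⟨fun j => q.out.1 (j + τ), hrot q.out.1 τ q.out.2⟩, hmem τ⟩ :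
        {P : A // Quot.mk R P = q})) ⟨?_, ?_⟩).symm
    · intro τ τ' hττ'
      have h1 : ∀ j : ZMod n, q.out.1 (j + τ) = q.out.1 (j + τ') := by
        intro j
        exact congrFun (congrArg (fun z => z.1.1) hττ') j
      have hper : ∀ x : ZMod n, q.out.1 (x + (τ - τ')) = q.out.1 x := by
        intro x
        have h2 := h1 (x - τ')
        rw [show x - τ' + τ = x + (τ - τ') by ring, show x - τ' + τ' = x by ring] at h2
        exact h2
      have h3 := hfree q.out.1 q.out.2 (τ - τ') hper
      exact sub_eq_zero.mp h3
    · rintro ⟨P, hq⟩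
      have h4 : Quot.mk R q.out = Quot.mk R P := hmk.trans hq.symm
      obtain ⟨τ, hτ⟩ : R q.out P := hEquiv.eqvGen_iff.mp (Quot.eq.mp h4)
      refine ⟨τ, ?_⟩
      apply Subtype.ext
      apply Subtype.ext
      funext j
      exact (hτ j).symm
  have e1 : A ≃ (Quot R) × ZMod n :=
    ((Equiv.sigmaFiberEquiv (Quot.mk R)).symm.trans
      (Equiv.sigmaCongrRight fib)).trans (Equiv.sigmaEquivProd (Quot R) (ZMod n))
  calc Nat.card (Quot R) * n
      = Nat.card (Quot R) * Nat.card (ZMod n) := by rw [Nat.card_zmod]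
    _ = Nat.card ((Quot R) × ZMod n) := (Nat.card_prod _ _).symm
    _ = Nat.card A := (Nat.card_congr e1).symm

end AuxGeneral

namespace EdgeFreeCover

variable (E : EdgeFreeCover) {m n : ℕ}

lemma act_act (g g' : E.G) (y : E.Y.H) : E.act g (E.act g' y) = E.act (g * g') y :=
  (E.act_mul g g' y).symm

lemma actV_act (g g' : E.G) (v : E.Y.V) : E.actV g (E.actV g' v) = E.actV (g * g') v :=
  (E.actV_mul g g' v).symm

lemma act_cancel {a b : E.G} {y : E.Y.H} (hab : E.act a y = E.act b y) : a = b := by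
  have h1 : E.act (b⁻¹ * a) y = y := by
    rw [E.act_mul, hab, E.act_act, inv_mul_cancel, E.act_one]
  exact (inv_mul_eq_one.mp (E.free _ _ h1)).symm

lemma πH_act (g : E.G) (y : E.Y.H) : E.πH (E.act g y) = E.πH y :=
  (E.πH_eq (E.act g y) y).mpr ⟨g⁻¹, by rw [E.act_act, inv_mul_cancel, E.act_one]⟩

lemma N_spec (y : E.Y.H) : E.act (E.N y) (E.sec (E.πH y)) = y :=
  Classical.choose_spec ((E.πH_eq (E.sec (E.πH y)) y).mp (E.sec_sec (E.πH y)))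

lemma N_act_sec (g : E.G) (x : E.X.H) : E.N (E.act g (E.sec x)) = g := by
  have hx : E.πH (E.act g (E.sec x)) = x := by rw [E.πH_act, E.sec_sec]
  have h2 := E.N_spec (E.act g (E.sec x))
  rw [hx] at h2
  exact E.act_cancel h2

lemma bar_sec (x : E.X.H) : E.Y.bar (E.sec x) = E.act (E.F x) (E.sec (E.X.bar x)) :=
  (E.F_spec x).symm

/-- The step element `F(h_x) γ_{x+1}`. -/
def cQ (h : ZMod m → E.X.H) (γ : ZMod m → E.G) (x : ZMod m) : E.G := E.F (h x) * γ (x + 1)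

/-- Partial products of step elements starting at shift `t`. -/
def WQ (h : ZMod m → E.X.H) (γ : ZMod m → E.G) (t : ZMod m) (k : ℕ) : E.G :=
  ((List.range k).map fun i : ℕ => cQ E h γ ((i : ZMod m) + t)).prod

/-- The shifted Frobenius element. -/
def FrQ (h : ZMod m → E.X.H) (γ : ZMod m → E.G) (t : ZMod m) : E.G := WQ E h γ t m

/-- The canonical lift starting on sheet `s` with rotation `t`. -/
def Pst (h : ZMod m → E.X.H) (γ : ZMod m → E.G) (hdvd : m ∣ n) (s : E.G) (t : ZMod m)
    (j : ZMod n) : E.Y.H :=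
  E.act (s * WQ E h γ t j.val) (E.sec (h (ZMod.castHom hdvd (ZMod m) j + t)))

variable (h : ZMod m → E.X.H) (γ : ZMod m → E.G)

lemma WQ_succ (t : ZMod m) (k : ℕ) :
    WQ E h γ t (k + 1) = WQ E h γ t k * cQ E h γ ((k : ZMod m) + t) :=
  List.prod_range_succ _ _

lemma WQ_add (t : ZMod m) (a b : ℕ) :
    WQ E h γ t (a + b) = WQ E h γ t a * WQ E h γ ((a : ZMod m) + t) b := by
  unfold WQ
  rw [List.range_add, List.map_append, List.prod_append, List.map_map]
  congr 2
  apply List.map_congr_left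
  intro i _
  simp only [Function.comp_apply]
  congr 1
  push_cast
  ring

lemma WQ_mul (t : ZMod m) (a : ℕ) : WQ E h γ t (m * a) = FrQ E h γ t ^ a := by
  induction a with
  | zero => simp [WQ]
  | succ a ih =>
    rw [Nat.mul_succ, WQ_add, ih, pow_succ]
    congr 1
    have h0 : ((m * a : ℕ) : ZMod m) + t = t := by
      push_cast
      rw [ZMod.natCast_self]
      ring
    rw [h0]
    rfl

lemma gamma_mul_WQ (x : ZMod m) (k : ℕ) :
    γ x * WQ E h γ x k
      = ((List.range k).map fun i : ℕ => γ ((i : ZMod m) + x) * E.F (h ((i : ZMod m) + x))).prod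
        * γ ((k : ZMod m) + x) := by
  induction k with
  | zero => simp [WQ]
  | succ k ih =>
    rw [WQ_succ, ← mul_assoc, ih, List.prod_range_succ]
    simp only [cQ]
    rw [show ((k + 1 : ℕ) : ZMod m) + x = ((k : ZMod m) + x) + 1 from by push_cast; ring]
    simp only [mul_assoc]

lemma FrQ_conj : FrQ E h γ 0 = (γ 0)⁻¹ * E.Frob h γ * γ 0 := by
  have hFrob : E.Frob h γ
      = ((List.range m).map fun i : ℕ => γ ((i : ZMod m)) * E.F (h ((i : ZMod m)))).prod := by
    unfold EdgeFreeCover.Frob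
    congr 1
    induction List.range m with
    | nil => rfl
    | cons a l ih => simp_all
  have h1 := gamma_mul_WQ E h γ 0 m
  simp only [add_zero, ZMod.natCast_self] at h1
  rw [hFrob,
    show FrQ E h γ 0 = (γ 0)⁻¹ * (γ 0 * WQ E h γ 0 m) from by unfold EdgeFreeCover.FrQ; group,
    h1]
  group

lemma FrQ_succ (hm : 0 < m) (t : ZMod m) :
    FrQ E h γ (t + 1) = (cQ E h γ t)⁻¹ * FrQ E h γ t * cQ E h γ t := by
  obtain ⟨m', rfl⟩ : ∃ m', m = m' + 1 := ⟨m - 1, (Nat.succ_pred_eq_of_pos hm).symm⟩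
  have e1 : WQ E h γ t (m' + 1) = cQ E h γ t * WQ E h γ (t + 1) m' := by
    unfold WQ
    rw [List.prod_range_succ']
    congr 1
    · simp
    · congr 1
      apply List.map_congr_left
      intro i _
      congr 1
      push_cast
      ring
  have e2 : WQ E h γ (t + 1) (m' + 1) = WQ E h γ (t + 1) m' * cQ E h γ t := by
    rw [WQ_succ]
    congr 1
    rw [show ((m' : ZMod (m' + 1)) + (t + 1)) = ((m' + 1 : ℕ) : ZMod (m' + 1)) + t from by
      push_cast; ring]
    rw [ZMod.natCast_self, zero_add]
  show WQ E h γ (t + 1) (m' + 1) = (cQ E h γ t)⁻¹ * WQ E h γ t (m' + 1) * cQ E h γ t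
  rw [e2, e1]
  group

lemma orderOf_FrQ (hm : 0 < m) (t : ZMod m) :
    orderOf (FrQ E h γ t) = orderOf (E.Frob h γ) := by
  haveI : NeZero m := ⟨hm.ne'⟩
  have base : orderOf (FrQ E h γ 0) = orderOf (E.Frob h γ) := by
    rw [FrQ_conj, orderOf_conj]
  exact zmod_ind (p := fun t => orderOf (FrQ E h γ t) = orderOf (E.Frob h γ)) base
    (fun t ht => by
      show orderOf (FrQ E h γ (t + 1)) = orderOf (E.Frob h γ)
      rw [FrQ_succ E h γ hm, orderOf_conj]
      exact ht) t

lemma WQ_n_one (hm : 0 < m) (hforder : n = orderOf (E.Frob h γ) * m) (t : ZMod m) :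
    WQ E h γ t n = 1 := by
  rw [hforder, Nat.mul_comm, WQ_mul, ← orderOf_FrQ E h γ hm t, pow_orderOf_eq_one]

lemma cst_surj (hdvd : m ∣ n) [NeZero m] :
    Function.Surjective (ZMod.castHom hdvd (ZMod m)) :=
  fun y => ⟨((y.val : ℕ) : ZMod n), by rw [map_natCast]; exact ZMod.natCast_rightInverse y⟩

lemma cst_val (hdvd : m ∣ n) [NeZero n] (j : ZMod n) :
    ZMod.castHom hdvd (ZMod m) j = ((j.val : ℕ) : ZMod m) := by
  conv_lhs => rw [← ZMod.natCast_rightInverse j]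
  rw [map_natCast]

lemma WQ_val_succ (hdvd : m ∣ n) [NeZero n] (t : ZMod m)
    (hW : WQ E h γ t n = 1) (j : ZMod n) :
    WQ E h γ t ((j + 1).val)
      = WQ E h γ t j.val * cQ E h γ (ZMod.castHom hdvd (ZMod m) j + t) := by
  have hval : (j + 1).val = (j.val + 1) % n := by
    rw [ZMod.val_add, ZMod.val_one_eq_one_mod]
    conv_rhs => rw [Nat.add_mod]
    rw [Nat.mod_eq_of_lt (ZMod.val_lt j)]
  rcases Nat.lt_or_ge (j.val + 1) n with hlt | hge
  · rw [hval, Nat.mod_eq_of_lt hlt, WQ_succ, cst_val hdvd]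
  · have heq : j.val + 1 = n := le_antisymm (ZMod.val_lt j) hge
    rw [hval, heq, Nat.mod_self, show WQ E h γ t 0 = 1 from rfl, cst_val hdvd, ← WQ_succ,
      heq, hW]

lemma pst_πH (hdvd : m ∣ n) (s : E.G) (t : ZMod m) (j : ZMod n) :
    E.πH (Pst E h γ hdvd s t j) = h (ZMod.castHom hdvd (ZMod m) j + t) := by
  unfold Pst
  rw [E.πH_act, E.sec_sec]

lemma pst_N (hdvd : m ∣ n) (s : E.G) (t : ZMod m) (j : ZMod n) :
    E.N (Pst E h γ hdvd s t j) = s * WQ E h γ t j.val := by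
  unfold Pst
  rw [E.N_act_sec]

lemma pst_imgG (hdvd : m ∣ n) [NeZero n] (s : E.G) (t : ZMod m)
    (hW : WQ E h γ t n = 1) (j : ZMod n) :
    E.imgG (Pst E h γ hdvd s t) j = γ (ZMod.castHom hdvd (ZMod m) j + t) := by
  have key : ∀ i : ZMod n,
      E.imgG (Pst E h γ hdvd s t) (i + 1) = γ (ZMod.castHom hdvd (ZMod m) (i + 1) + t) := by
    intro i
    unfold EdgeFreeCover.imgG
    rw [add_sub_cancel_right, pst_πH, pst_N, pst_N, WQ_val_succ E h γ hdvd t hW i,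
      map_add, map_one, add_right_comm]
    simp only [cQ]
    group
  have h1 := key (j - 1)
  rwa [sub_add_cancel] at h1

lemma pst_liesOver (hdvd : m ∣ n) [NeZero n] (s : E.G) (t : ZMod m)
    (hW : WQ E h γ t n = 1) :
    LiesOver E hdvd (Pst E h γ hdvd s t) h γ :=
  ⟨t, fun j => ⟨pst_πH E h γ hdvd s t j, pst_imgG E h γ hdvd s t hW j⟩⟩

lemma pst_closed (hdvd : m ∣ n) [NeZero n] (hQc : E.IsClosedGPath h γ)
    (s : E.G) (t : ZMod m) (hW : WQ E h γ t n = 1) :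
    E.Y.IsClosedPath (Pst E h γ hdvd s t) := by
  intro j
  have harg : ZMod.castHom hdvd (ZMod m) (j + 1) + t
      = (ZMod.castHom hdvd (ZMod m) j + t) + 1 := by
    rw [map_add, map_one]; ring
  have hL : E.Y.r (Pst E h γ hdvd s t (j + 1))
      = E.actV (s * (WQ E h γ t j.val * cQ E h γ (ZMod.castHom hdvd (ZMod m) j + t)))
          (E.vT (E.X.r (h ((ZMod.castHom hdvd (ZMod m) j + t) + 1)))) := by
    unfold Pst
    rw [WQ_val_succ E h γ hdvd t hW j, harg, E.act_r, E.sec_root]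
  have hR : E.Y.r (E.Y.bar (Pst E h γ hdvd s t j))
      = E.actV (s * WQ E h γ t j.val * E.F (h (ZMod.castHom hdvd (ZMod m) j + t)))
          (E.vT (E.X.r (h ((ZMod.castHom hdvd (ZMod m) j + t) + 1)))) := by
    unfold Pst
    rw [E.act_bar, E.bar_sec, E.act_act, E.act_r, E.sec_root,
      ← hQc.1 (ZMod.castHom hdvd (ZMod m) j + t)]
  rw [hL, hR]
  have hstab : E.actV (γ ((ZMod.castHom hdvd (ZMod m) j + t) + 1))
      (E.vT (E.X.r (h ((ZMod.castHom hdvd (ZMod m) j + t) + 1))))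
      = E.vT (E.X.r (h ((ZMod.castHom hdvd (ZMod m) j + t) + 1))) :=
    hQc.2 ((ZMod.castHom hdvd (ZMod m) j + t) + 1)
  rw [show s * (WQ E h γ t j.val * cQ E h γ (ZMod.castHom hdvd (ZMod m) j + t))
      = (s * WQ E h γ t j.val * E.F (h (ZMod.castHom hdvd (ZMod m) j + t)))
        * γ ((ZMod.castHom hdvd (ZMod m) j + t) + 1) from by simp only [cQ]; group,
    ← E.actV_act, hstab]

lemma pst_reduced (hdvd : m ∣ n) [NeZero n] (hQr : E.IsReducedGPath h γ)
    (s : E.G) (t : ZMod m) (hW : WQ E h γ t n = 1) :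
    E.Y.IsReducedPath (Pst E h γ hdvd s t) := by
  intro j heq
  have harg : ZMod.castHom hdvd (ZMod m) (j + 1) + t
      = (ZMod.castHom hdvd (ZMod m) j + t) + 1 := by
    rw [map_add, map_one]; ring
  have hbar : E.X.bar (h (ZMod.castHom hdvd (ZMod m) j + t))
      = h ((ZMod.castHom hdvd (ZMod m) j + t) + 1) := by
    have h1 := congrArg E.πH heq
    rw [pst_πH, harg, ← E.πH_bar, pst_πH] at h1
    exact h1.symm
  rcases hQr (ZMod.castHom hdvd (ZMod m) j + t) with hc | hc
  · exact hc hbar.symm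
  · apply hc
    unfold Pst at heq
    rw [E.act_bar, E.bar_sec, E.act_act, WQ_val_succ E h γ hdvd t hW j, harg, hbar] at heq
    have h2 := E.act_cancel heq
    calc γ ((ZMod.castHom hdvd (ZMod m) j + t) + 1)
        = (s * WQ E h γ t j.val * E.F (h (ZMod.castHom hdvd (ZMod m) j + t)))⁻¹
          * (s * (WQ E h γ t j.val
            * cQ E h γ (ZMod.castHom hdvd (ZMod m) j + t))) := by simp only [cQ]; group
      _ = 1 := by rw [h2]; group

lemma classify (hdvd : m ∣ n) [NeZero n] (t : ZMod m) (hW : WQ E h γ t n = 1)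
    (P : ZMod n → E.Y.H)
    (hP : ∀ j, E.imgH P j = h (ZMod.castHom hdvd (ZMod m) j + t) ∧
      E.imgG P j = γ (ZMod.castHom hdvd (ZMod m) j + t)) :
    ∀ j, P j = Pst E h γ hdvd (E.N (P 0)) t j := by
  have hA : ∀ j, P j = E.act (E.N (P j)) (E.sec (h (ZMod.castHom hdvd (ZMod m) j + t))) := by
    intro j
    have h1 := E.N_spec (P j)
    rw [show E.πH (P j) = h (ZMod.castHom hdvd (ZMod m) j + t) from (hP j).1] at h1
    exact h1.symm
  have hB : ∀ j, E.N (P j) = E.N (P 0) * WQ E h γ t j.val := by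
    refine zmod_ind ?_ ?_
    · rw [ZMod.val_zero, show WQ E h γ t 0 = 1 from rfl, mul_one]
    · intro j hj
      have hg := (hP (j + 1)).2
      unfold EdgeFreeCover.imgG at hg
      rw [add_sub_cancel_right,
        show E.πH (P j) = h (ZMod.castHom hdvd (ZMod m) j + t) from (hP j).1] at hg
      have hg' : E.N (P (j + 1)) = E.N (P j)
          * (E.F (h (ZMod.castHom hdvd (ZMod m) j + t))
            * γ (ZMod.castHom hdvd (ZMod m) (j + 1) + t)) := by
        rw [← hg]; group
      rw [hg', hj, WQ_val_succ E h γ hdvd t hW j]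
      simp only [cQ]
      rw [map_add, map_one, add_right_comm]
      group
  intro j
  rw [hA j, hB j]
  rfl

lemma pst_primitive (hdvd : m ∣ n) (hm : 0 < m) (hn0 : 0 < n)
    (hQp : E.GPathIsPrimitive h γ) (hforder : n = orderOf (E.Frob h γ) * m)
    (s : E.G) (t : ZMod m) :
    E.Y.IsPrimitive (Pst E h γ hdvd s t) := by
  haveI : NeZero n := ⟨hn0.ne'⟩
  haveI : NeZero m := ⟨hm.ne'⟩
  have hW := WQ_n_one E h γ hm hforder t
  intro d hd hdn hper
  have hpair : ∀ y : ZMod m, h (y + (d : ZMod m)) = h y ∧ γ (y + (d : ZMod m)) = γ y := by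
    intro y
    obtain ⟨j, hj⟩ := cst_surj hdvd (y - t)
    have e1 : ZMod.castHom hdvd (ZMod m) j + t = y := by rw [hj]; ring
    have e2 : ZMod.castHom hdvd (ZMod m) (j + (d : ZMod n)) + t = y + (d : ZMod m) := by
      rw [map_add, map_natCast, hj]; ring
    have h1 := congrArg E.πH (hper j)
    rw [pst_πH, pst_πH] at h1
    have h3 : γ (ZMod.castHom hdvd (ZMod m) (j + (d : ZMod n)) + t)
        = γ (ZMod.castHom hdvd (ZMod m) j + t) := by
      rw [← pst_imgG E h γ hdvd s t hW (j + (d : ZMod n)), ← pst_imgG E h γ hdvd s t hW j]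
      unfold EdgeFreeCover.imgG
      rw [show j + (d : ZMod n) - 1 = (j - 1) + (d : ZMod n) from by ring, hper (j - 1),
        hper j]
    rw [e1, e2] at h1 h3
    exact ⟨h1, h3⟩
  have hgcd := period_gcd (fun y => (h y, γ y)) (d : ZMod m)
    (fun y => by simp only [Prod.mk.injEq]; exact hpair y)
  rw [ZMod.val_natCast] at hgcd
  have hQper : E.GPathHasPeriod h γ (Nat.gcd (d % m) m) := fun y =>
    ⟨congrArg Prod.fst (hgcd y), congrArg Prod.snd (hgcd y)⟩
  have he_m : Nat.gcd (d % m) m = m :=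
    hQp _ (Nat.gcd_pos_of_pos_right _ hm) (Nat.gcd_dvd_right _ _) hQper
  have hmd : m ∣ d := by
    have h5 : Nat.gcd m d = m := by rw [Nat.gcd_rec]; exact he_m
    exact h5 ▸ Nat.gcd_dvd_right m d
  obtain ⟨k, hk⟩ := hmd
  have hkf : k ∣ orderOf (E.Frob h γ) := by
    have hdn' : d ∣ m * orderOf (E.Frob h γ) := by rwa [hforder, Nat.mul_comm] at hdn
    rw [hk] at hdn'
    exact (Nat.mul_dvd_mul_iff_left hm).mp hdn'
  by_cases hdeq : d = n
  · exact hdeq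
  · have hdlt : d < n := lt_of_le_of_ne (Nat.le_of_dvd hn0 hdn) hdeq
    have hNval := congrArg E.N (hper 0)
    rw [pst_N, pst_N, zero_add, ZMod.val_natCast, Nat.mod_eq_of_lt hdlt, ZMod.val_zero]
      at hNval
    have hWd : WQ E h γ t d = 1 := (mul_left_cancel hNval).trans rfl
    rw [hk, WQ_mul] at hWd
    have hford : orderOf (E.Frob h γ) ∣ k := by
      rw [← orderOf_FrQ E h γ hm t]
      exact orderOf_dvd_of_pow_eq_one hWd
    have hkeq : k = orderOf (E.Frob h γ) := Nat.dvd_antisymm hkf hford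
    rw [hk, hkeq, Nat.mul_comm, ← hforder]

end EdgeFreeCover

/-- Let `G` of order `d` act edge-freely on a finite graph `Y` with
quotient graph of groups `𝕏`, and let `𝔮` be a prime of `𝕏` represented by a
primitive closed reduced path `Q = (h, γ)` of length `m`, with `f = f(𝔮)` the order of
the Frobenius element `F(Q)`. Then (1) `G` acts transitively on the primes of `Y`
lying over `𝔮` (any two primitive paths over `𝔮` agree after translating by some
`g ∈ G` and rotating), and (2) the number of primes of `Y` over `𝔮` (equivalence
classes, under rotation, of primitive closed reduced paths of length `f·m` lying over
`𝔮`) equals `d / f`. -/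
theorem primes_over_transitive_and_count (E : EdgeFreeCover)
    (m : ℕ) (hm : 0 < m)
    (h : ZMod m → E.X.H) (γ : ZMod m → E.G)
    (hQc : E.IsClosedGPath h γ) (hQr : E.IsReducedGPath h γ)
    (hQp : E.GPathIsPrimitive h γ)
    (f n : ℕ) (hf : f = orderOf (E.Frob h γ)) (hn : n = f * m) (hdvd : m ∣ n) :
    (∀ P P' : ZMod n → E.Y.H,
      E.Y.IsClosedPath P → E.Y.IsReducedPath P → E.Y.IsPrimitive P →
        LiesOver E hdvd P h γ →
      E.Y.IsClosedPath P' → E.Y.IsReducedPath P' → E.Y.IsPrimitive P' →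
        LiesOver E hdvd P' h γ →
      ∃ (g : E.G) (t : ZMod n), ∀ j, E.act g (P (j + t)) = P' j) ∧
    Nat.card (Quot (fun (P P' : {P : ZMod n → E.Y.H //
        E.Y.IsClosedPath P ∧ E.Y.IsReducedPath P ∧ E.Y.IsPrimitive P ∧
          LiesOver E hdvd P h γ}) =>
      ∃ t : ZMod n, ∀ j, P'.1 j = P.1 (j + t))) = Fintype.card E.G / f := by
  classical
  haveI : NeZero m := ⟨hm.ne'⟩
  have hf0 : 0 < f := by rw [hf]; exact orderOf_pos _
  have hn0 : 0 < n := by rw [hn]; positivity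
  haveI : NeZero n := ⟨hn0.ne'⟩
  have hforder : n = orderOf (E.Frob h γ) * m := by rw [hn, hf]
  have hW : ∀ t, EdgeFreeCover.WQ E h γ t n = 1 :=
    EdgeFreeCover.WQ_n_one E h γ hm hforder
  constructor
  · -- transitivity
    intro P P' _ _ _ hPo _ _ _ hP'o
    obtain ⟨t, hPt⟩ := hPo
    obtain ⟨t', hP't⟩ := hP'o
    have hCP := EdgeFreeCover.classify E h γ hdvd t (hW t) P hPt
    have hCP' := EdgeFreeCover.classify E h γ hdvd t' (hW t') P' hP't
    set s := E.N (P 0) with hs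
    set s' := E.N (P' 0) with hs'
    set τ : ZMod n := (((t' - t).val : ℕ) : ZMod n) with hτdef
    have hcτ : ZMod.castHom hdvd (ZMod m) τ = t' - t := by
      rw [hτdef, map_natCast]
      exact ZMod.natCast_rightInverse _
    have hconst : ∀ j : ZMod n,
        (s' * EdgeFreeCover.WQ E h γ t' j.val)
          * (s * EdgeFreeCover.WQ E h γ t ((j + τ).val))⁻¹
        = (s' * EdgeFreeCover.WQ E h γ t' (0 : ZMod n).val)
          * (s * EdgeFreeCover.WQ E h γ t (((0 : ZMod n) + τ)).val)⁻¹ := by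
      refine zmod_ind rfl ?_
      intro j hj
      rw [EdgeFreeCover.WQ_val_succ E h γ hdvd t' (hW t') j,
        show j + 1 + τ = (j + τ) + 1 by ring,
        EdgeFreeCover.WQ_val_succ E h γ hdvd t (hW t) (j + τ),
        show ZMod.castHom hdvd (ZMod m) (j + τ) + t = ZMod.castHom hdvd (ZMod m) j + t' from by
          rw [map_add, hcτ]; ring,
        ← hj]
      group
    refine ⟨(s' * EdgeFreeCover.WQ E h γ t' (0 : ZMod n).val)
      * (s * EdgeFreeCover.WQ E h γ t (((0 : ZMod n) + τ)).val)⁻¹, τ, fun j => ?_⟩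
    rw [hCP (j + τ), hCP' j]
    unfold EdgeFreeCover.Pst
    rw [E.act_act,
      show ZMod.castHom hdvd (ZMod m) (j + τ) + t = ZMod.castHom hdvd (ZMod m) j + t' from by
        rw [map_add, hcτ]; ring]
    congr 1
    rw [← hconst j]
    group
  · -- counting
    have hrot : ∀ (P : ZMod n → E.Y.H) (τ : ZMod n),
        (E.Y.IsClosedPath P ∧ E.Y.IsReducedPath P ∧ E.Y.IsPrimitive P ∧ LiesOver E hdvd P h γ)
        → (E.Y.IsClosedPath (fun j => P (j + τ)) ∧ E.Y.IsReducedPath (fun j => P (j + τ))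
            ∧ E.Y.IsPrimitive (fun j => P (j + τ)) ∧ LiesOver E hdvd (fun j => P (j + τ)) h γ) := by
      intro P τ ⟨hc, hr, hp, hl⟩
      refine ⟨?_, ?_, ?_, ?_⟩
      · intro j
        have h1 := hc (j + τ)
        rw [add_right_comm j τ 1] at h1
        exact h1
      · intro j
        have h1 := hr (j + τ)
        rw [add_right_comm j τ 1] at h1
        exact h1
      · intro d hd hdn hper
        have hper' : ∀ x : ZMod n, P (x + (d : ZMod n) + τ) = P (x + τ) := fun x => hper x
        apply hp d hd hdn
        intro j
        have h1 := hper' (j - τ)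
        rwa [show j - τ + (d : ZMod n) + τ = j + (d : ZMod n) by ring,
          show j - τ + τ = j by ring] at h1
      · obtain ⟨t, hPt⟩ := hl
        refine ⟨t + ZMod.castHom hdvd (ZMod m) τ, fun j => ?_⟩
        have harg : ZMod.castHom hdvd (ZMod m) j + (t + ZMod.castHom hdvd (ZMod m) τ)
            = ZMod.castHom hdvd (ZMod m) (j + τ) + t := by
          rw [map_add]; ring
        constructor
        · show E.πH (P (j + τ)) = _
          rw [harg]
          exact (hPt (j + τ)).1
        · show (E.F (E.πH (P (j - 1 + τ))))⁻¹ * (E.N (P (j - 1 + τ)))⁻¹ * E.N (P (j + τ)) = _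
          rw [harg, show j - 1 + τ = j + τ - 1 by ring]
          exact (hPt (j + τ)).2
    have hfree : ∀ P : ZMod n → E.Y.H,
        (E.Y.IsClosedPath P ∧ E.Y.IsReducedPath P ∧ E.Y.IsPrimitive P ∧ LiesOver E hdvd P h γ)
        → ∀ x : ZMod n, (∀ j, P (j + x) = P j) → x = 0 := by
      intro P hP x hx
      exact eq_zero_of_period hn0 P hP.2.2.1 x hx
    have key := card_quot_rot (β := E.Y.H) hn0
      (S := fun P => E.Y.IsClosedPath P ∧ E.Y.IsReducedPath P ∧ E.Y.IsPrimitive P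
        ∧ LiesOver E hdvd P h γ) hrot hfree
    have key' : Nat.card (Quot (fun (P P' : {P : ZMod n → E.Y.H //
          E.Y.IsClosedPath P ∧ E.Y.IsReducedPath P ∧ E.Y.IsPrimitive P ∧
            LiesOver E hdvd P h γ}) =>
        ∃ t : ZMod n, ∀ j, P'.1 j = P.1 (j + t))) * n
        = Nat.card {P : ZMod n → E.Y.H //
            E.Y.IsClosedPath P ∧ E.Y.IsReducedPath P ∧ E.Y.IsPrimitive P ∧
              LiesOver E hdvd P h γ} := key
    -- compute the cardinality of the set of paths over 𝔮
    have hΦinj : Function.Injective (fun st : E.G × ZMod m =>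
        EdgeFreeCover.Pst E h γ hdvd st.1 st.2) := by
      intro ⟨s, t⟩ ⟨s', t'⟩ hst
      have hfun : EdgeFreeCover.Pst E h γ hdvd s t = EdgeFreeCover.Pst E h γ hdvd s' t' := hst
      have hpair : ∀ y : ZMod m, h (y + (t - t')) = h y ∧ γ (y + (t - t')) = γ y := by
        intro y
        obtain ⟨j, hj⟩ := EdgeFreeCover.cst_surj hdvd (y - t')
        have e1 : ZMod.castHom hdvd (ZMod m) j + t' = y := by rw [hj]; ring
        have e2 : ZMod.castHom hdvd (ZMod m) j + t = y + (t - t') := by rw [hj]; ring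
        have h1 : h (ZMod.castHom hdvd (ZMod m) j + t)
            = h (ZMod.castHom hdvd (ZMod m) j + t') := by
          rw [← EdgeFreeCover.pst_πH E h γ hdvd s t j,
            ← EdgeFreeCover.pst_πH E h γ hdvd s' t' j, hfun]
        have h2 : γ (ZMod.castHom hdvd (ZMod m) j + t)
            = γ (ZMod.castHom hdvd (ZMod m) j + t') := by
          rw [← EdgeFreeCover.pst_imgG E h γ hdvd s t (hW t) j,
            ← EdgeFreeCover.pst_imgG E h γ hdvd s' t' (hW t') j, hfun]
        rw [e1, e2] at h1 h2
        exact ⟨h1, h2⟩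
      have htt : t - t' = 0 := by
        refine eq_zero_of_period hm (fun y => (h y, γ y)) ?_ _
          (fun y => by simp only [Prod.mk.injEq]; exact hpair y)
        intro d hd hdm hper
        exact hQp d hd hdm (fun y => ⟨congrArg Prod.fst (hper y), congrArg Prod.snd (hper y)⟩)
      have ht : t = t' := sub_eq_zero.mp htt
      have hs : s = s' := by
        have h0 : EdgeFreeCover.Pst E h γ hdvd s t 0 = EdgeFreeCover.Pst E h γ hdvd s' t' 0 :=
          congrFun hfun 0
        have h1 := congrArg E.N h0
        rw [EdgeFreeCover.pst_N, EdgeFreeCover.pst_N, ZMod.val_zero] at h1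
        simpa [EdgeFreeCover.WQ] using h1
      rw [hs, ht]
    have hΦsurj : ∀ P : ZMod n → E.Y.H,
        (E.Y.IsClosedPath P ∧ E.Y.IsReducedPath P ∧ E.Y.IsPrimitive P ∧ LiesOver E hdvd P h γ)
        → ∃ st : E.G × ZMod m, EdgeFreeCover.Pst E h γ hdvd st.1 st.2 = P := by
      intro P hP
      obtain ⟨t, hPt⟩ := hP.2.2.2
      exact ⟨(E.N (P 0), t), (funext (EdgeFreeCover.classify E h γ hdvd t (hW t) P hPt)).symm⟩
    have eS : E.G × ZMod m ≃ {P : ZMod n → E.Y.H //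
        E.Y.IsClosedPath P ∧ E.Y.IsReducedPath P ∧ E.Y.IsPrimitive P ∧
          LiesOver E hdvd P h γ} := by
      refine Equiv.ofBijective (fun st => ⟨EdgeFreeCover.Pst E h γ hdvd st.1 st.2,
        EdgeFreeCover.pst_closed E h γ hdvd hQc st.1 st.2 (hW st.2),
        EdgeFreeCover.pst_reduced E h γ hdvd hQr st.1 st.2 (hW st.2),
        EdgeFreeCover.pst_primitive E h γ hdvd hm hn0 hQp hforder st.1 st.2,
        EdgeFreeCover.pst_liesOver E h γ hdvd st.1 st.2 (hW st.2)⟩) ⟨?_, ?_⟩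
      · intro a b hab
        exact hΦinj (congrArg Subtype.val hab)
      · intro P
        obtain ⟨st, hst⟩ := hΦsurj P.1 P.2
        exact ⟨st, Subtype.ext hst⟩
    have hcardS : Nat.card {P : ZMod n → E.Y.H //
        E.Y.IsClosedPath P ∧ E.Y.IsReducedPath P ∧ E.Y.IsPrimitive P ∧
          LiesOver E hdvd P h γ} = Fintype.card E.G * m := by
      rw [← Nat.card_congr eS, Nat.card_prod, Nat.card_eq_fintype_card, Nat.card_zmod]
    rw [hcardS] at key'
    obtain ⟨e, he⟩ : f ∣ Fintype.card E.G := hf ▸ orderOf_dvd_card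
    have hQ := Nat.eq_of_mul_eq_mul_right hn0
      (key'.trans (show Fintype.card E.G * m = e * n from by rw [he, hn]; ring))
    rw [hQ, he, Nat.mul_div_cancel_left e hf0]
end

section
/- Let G act edge-freely on a finite graph Y with quotient graph of groups 𝕏. Then ζ(u,𝕏) divides ζ(u,Y), in the sense that ζ(u,Y)/ζ(u,𝕏) = ∏_{ρ ≠ 1 irreducible} L(u,ρ,Y/𝕏)^{d_ρ}, where the product is over nontrivial irreducible representations of G with multiplicities d_ρ = dim ρ; equivalently, the polynomial ζ(u,𝕏)^{-1} divides the polynomial ζ(u,Y)^{-1}. -/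
open Polynomial

namespace EdgeFreeCover

variable (E : EdgeFreeCover)

/-- The half-edge matrix of the graph `Y` itself (all charges 1), so that
`ζ(u,Y)⁻¹ = det(I - W_Y u)` by the two-term determinant formula. -/
def WY : Matrix E.Y.H E.Y.H ℤ := fun f f' =>
  if f' = E.Y.bar f then 0
  else if E.Y.r (E.Y.bar f) = E.Y.r f' then 1 else 0

/-- The half-edge adjacency matrix `W` of the quotient graph of groups `𝕏 = Y ⫽ G`,
whose charges are the orders of the vertex stabilizers, so that
`ζ(u,𝕏)⁻¹ = det(I - W u)` by the two-term determinant formula. -/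
noncomputable def Wquot : Matrix E.X.H E.X.H ℤ := fun h h' =>
  if h' = E.X.bar h then
    (Nat.card {g : E.G // E.InStab (E.X.r h') g} : ℤ) - 1
  else if E.X.r (E.X.bar h) = E.X.r h' then
    (Nat.card {g : E.G // E.InStab (E.X.r h') g} : ℤ)
  else 0

end EdgeFreeCover

namespace EdgeFreeCover

variable (E : EdgeFreeCover)

-- basics
lemma act_cancel_s14 {g g' : E.G} {f : E.Y.H} (h : E.act g f = E.act g' f) : g = g' := by
  have h1 : E.act (g'⁻¹ * g) f = f := by
    rw [E.act_mul, h, ← E.act_mul, inv_mul_cancel, E.act_one]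
  have := E.free _ _ h1
  rwa [inv_mul_eq_one, eq_comm] at this

lemma actV_cancel_left {g : E.G} {v v' : E.Y.V} (h : E.actV g v = E.actV g v') : v = v' := by
  have : E.actV g⁻¹ (E.actV g v) = E.actV g⁻¹ (E.actV g v') := by rw [h]
  rwa [← E.actV_mul, ← E.actV_mul, inv_mul_cancel, E.actV_one, E.actV_one] at this

lemma sec_inj : Function.Injective E.sec := fun a b h => by
  rw [← E.sec_sec a, h, E.sec_sec]

lemma πH_act_sec (g : E.G) (h : E.X.H) : E.πH (E.act g (E.sec h)) = h := by
  have : E.πH (E.sec h) = E.πH (E.act g (E.sec h)) := (E.πH_eq _ _).mpr ⟨g, rfl⟩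
  rw [← this, E.sec_sec]

lemma exists_act_sec (f : E.Y.H) : ∃ g, E.act g (E.sec (E.πH f)) = f :=
  (E.πH_eq _ f).mp (E.sec_sec _)

lemma πV_actV (g : E.G) (v : E.Y.V) : E.πV (E.actV g v) = E.πV v := by
  exact ((E.πV_eq _ _).mpr ⟨g, rfl⟩).symm


lemma card_act_eq_stab (w : E.X.V) (v : E.Y.V) (hv : E.πV v = w) :
    (Finset.univ.filter fun g => E.actV g (E.vT w) = v).card
      = (Finset.univ.filter fun g => E.actV g (E.vT w) = E.vT w).card := by
  obtain ⟨g₀, hg₀⟩ := (E.πV_eq (E.vT w) v).mp (by rw [E.vT_sec, hv])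
  apply Finset.card_bij' (fun g _ => g₀⁻¹ * g) (fun g _ => g₀ * g)
  · intro g hg
    simp only [Finset.mem_filter, Finset.mem_univ, true_and] at hg ⊢
    rw [E.actV_mul, hg, ← hg₀, ← E.actV_mul, inv_mul_cancel, E.actV_one]
  · intro g hg
    simp only [Finset.mem_filter, Finset.mem_univ, true_and] at hg ⊢
    rw [E.actV_mul, hg, hg₀]
  · intro g _; group
  · intro g _; group

lemma natCard_stab (w : E.X.V) :
    (Nat.card {g : E.G // E.InStab w g}) =
      (Finset.univ.filter fun g => E.actV g (E.vT w) = E.vT w).card := by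
  haveI : DecidablePred (E.InStab w) := fun g =>
    inferInstanceAs (Decidable (E.actV g (E.vT w) = E.vT w))
  rw [Nat.card_eq_fintype_card, Fintype.card_subtype]
  exact Finset.card_bij (fun g _ => g) (by simp only [Finset.mem_filter, Finset.mem_univ, true_and]; exact fun g hg => hg) (by simp)
    (by intro b hb; simp only [Finset.mem_filter, Finset.mem_univ, true_and] at hb
        exact ⟨b, by simp only [Finset.mem_filter, Finset.mem_univ, true_and]; exact hb, rfl⟩)

def S0 : Matrix E.X.H E.Y.H ℤ := Matrix.of fun h f => if E.πH f = h then 1 else 0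

lemma key_intertwine : E.S0 * E.WY = E.Wquot * E.S0 := by
  ext h f'
  have hR : (E.Wquot * E.S0) h f' = E.Wquot h (E.πH f') := by
    simp only [Matrix.mul_apply, S0, Matrix.of_apply, mul_ite, mul_one, mul_zero]
    rw [Finset.sum_ite_eq Finset.univ (E.πH f') (fun h'' => E.Wquot h h'')]
    simp
  rw [hR]
  -- left side: sum over the fibre of h
  have hL1 : (E.S0 * E.WY) h f' = ∑ g : E.G, E.WY (E.act g (E.sec h)) f' := by
    simp only [Matrix.mul_apply, S0, Matrix.of_apply, ite_mul, one_mul, zero_mul]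
    rw [← Finset.sum_filter]
    have himg : Finset.univ.filter (fun f => E.πH f = h) =
        Finset.univ.image (fun g : E.G => E.act g (E.sec h)) := by
      ext f
      simp only [Finset.mem_filter, Finset.mem_univ, true_and, Finset.mem_image]
      constructor
      · intro hf
        obtain ⟨g, hg⟩ := E.exists_act_sec f
        exact ⟨g, by rwa [hf] at hg⟩
      · rintro ⟨g, rfl⟩; exact E.πH_act_sec g h
    rw [himg, Finset.sum_image (fun x _ y _ hxy => E.act_cancel_s14 hxy)]
  rw [hL1]
  set w := E.X.r (E.X.bar h) with hw
  have hW : ∀ g : E.G, E.WY (E.act g (E.sec h)) f' =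
      (if E.actV (g * E.F h) (E.vT w) = E.Y.r f' then (1:ℤ) else 0)
      - (if f' = E.act (g * E.F h) (E.sec (E.X.bar h)) then (1:ℤ) else 0) := by
    intro g
    have hbar : E.Y.bar (E.act g (E.sec h)) = E.act (g * E.F h) (E.sec (E.X.bar h)) := by
      rw [E.act_bar, ← E.F_spec, ← E.act_mul]
    have hroot : E.Y.r (E.act (g * E.F h) (E.sec (E.X.bar h))) = E.actV (g * E.F h) (E.vT w) := by
      rw [E.act_r, E.sec_root]
    show (if f' = E.Y.bar (E.act g (E.sec h)) then (0:ℤ)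
      else if E.Y.r (E.Y.bar (E.act g (E.sec h))) = E.Y.r f' then 1 else 0) = _
    rw [hbar, hroot]
    by_cases h1 : f' = E.act (g * E.F h) (E.sec (E.X.bar h))
    · have h2 : E.actV (g * E.F h) (E.vT w) = E.Y.r f' := by rw [h1, hroot]
      simp [h1, h2]
    · simp [h1]
  simp only [hW]
  rw [Finset.sum_sub_distrib]
  -- reindex both sums by g ↦ g * (F h)⁻¹
  have e1 : ∑ g : E.G, (if E.actV (g * E.F h) (E.vT w) = E.Y.r f' then (1:ℤ) else 0)
      = ∑ g : E.G, (if E.actV g (E.vT w) = E.Y.r f' then (1:ℤ) else 0) :=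
    Fintype.sum_equiv (Equiv.mulRight (E.F h)) _ _ (fun g => rfl)
  have e2 : ∑ g : E.G, (if f' = E.act (g * E.F h) (E.sec (E.X.bar h)) then (1:ℤ) else 0)
      = ∑ g : E.G, (if f' = E.act g (E.sec (E.X.bar h)) then (1:ℤ) else 0) :=
    Fintype.sum_equiv (Equiv.mulRight (E.F h)) _ _ (fun g => rfl)
  rw [e1, e2]
  have hπr : E.πV (E.Y.r f') = E.X.r (E.πH f') := (E.πH_r f').symm
  have hb : (∑ g : E.G, if f' = E.act g (E.sec (E.X.bar h)) then (1:ℤ) else 0)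
      = if E.πH f' = E.X.bar h then 1 else 0 := by
    by_cases hc : E.πH f' = E.X.bar h
    · obtain ⟨g₁, hg₁⟩ : ∃ g, E.act g (E.sec (E.X.bar h)) = f' :=
        (E.πH_eq (E.sec (E.X.bar h)) f').mp (by rw [E.sec_sec, hc])
      rw [if_pos hc, Finset.sum_eq_single g₁]
      · rw [if_pos hg₁.symm]
      · intro g _ hg
        rw [if_neg]
        intro he
        exact hg (E.act_cancel_s14 (hg₁.trans he)).symm
      · simp
    · rw [if_neg hc]
      apply Finset.sum_eq_zero
      intro g _
      rw [if_neg]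
      intro he
      exact hc (by rw [he, E.πH_act_sec])
  have hva : (∑ g : E.G, if E.actV g (E.vT w) = E.Y.r f' then (1:ℤ) else 0)
      = ((Finset.univ.filter fun g => E.actV g (E.vT w) = E.Y.r f').card : ℤ) := by
    rw [Finset.sum_boole]
  rw [hb, hva]
  show _ = E.Wquot h (E.πH f')
  by_cases c1 : E.πH f' = E.X.bar h
  · have hw1 : E.X.r (E.πH f') = w := by rw [c1]
    have hcard := E.card_act_eq_stab w (E.Y.r f') (by rw [hπr, hw1])
    have hnat := E.natCard_stab w
    show _ = (if E.πH f' = E.X.bar h then (Nat.card {g : E.G // E.InStab (E.X.r (E.πH f')) g} : ℤ) - 1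
      else if E.X.r (E.X.bar h) = E.X.r (E.πH f') then
        (Nat.card {g : E.G // E.InStab (E.X.r (E.πH f')) g} : ℤ) else 0)
    rw [if_pos c1, if_pos c1, hw1, hnat, hcard]
  · rw [if_neg c1, sub_zero]
    show _ = (if E.πH f' = E.X.bar h then (Nat.card {g : E.G // E.InStab (E.X.r (E.πH f')) g} : ℤ) - 1
      else if E.X.r (E.X.bar h) = E.X.r (E.πH f') then
        (Nat.card {g : E.G // E.InStab (E.X.r (E.πH f')) g} : ℤ) else 0)
    rw [if_neg c1]
    by_cases c2 : E.X.r (E.X.bar h) = E.X.r (E.πH f')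
    · have hw1 : E.X.r (E.πH f') = w := c2.symm
      have hcard := E.card_act_eq_stab w (E.Y.r f') (by rw [hπr, hw1])
      have hnat := E.natCard_stab w
      rw [if_pos c2, hw1, hnat, hcard]
    · rw [if_neg c2]
      norm_cast
      rw [Finset.card_eq_zero, Finset.filter_eq_empty_iff]
      intro g _
      intro he
      apply c2
      have : E.πV (E.actV g (E.vT w)) = w := by rw [E.πV_actV, E.vT_sec]
      rw [← hπr, ← he, this]


open Polynomial

noncomputable def Sq : Matrix E.X.H E.Y.H (Polynomial ℤ) := E.S0.map C

noncomputable def Mq : Matrix E.Y.H E.Y.H (Polynomial ℤ) :=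
  1 - (Polynomial.X : Polynomial ℤ) • (E.WY.map C)

noncomputable def Aq : Matrix E.X.H E.X.H (Polynomial ℤ) :=
  1 - (Polynomial.X : Polynomial ℤ) • (E.Wquot.map C)

noncomputable def Nq : Matrix E.Y.H E.Y.H (Polynomial ℤ) := Matrix.of fun f f' =>
  if E.sec (E.πH f') = f' then 0 else if f = E.sec (E.πH f') then 1 else 0

lemma Nq_sq : E.Nq * E.Nq = 0 := by
  refine Matrix.ext fun a c => ?_
  rw [Matrix.mul_apply]
  simp only [Matrix.zero_apply]
  apply Finset.sum_eq_zero
  intro b _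
  by_cases h1 : E.sec (E.πH c) = c
  · simp [Nq, h1]
  · by_cases h2 : b = E.sec (E.πH c)
    · have hb : E.sec (E.πH b) = b := by rw [h2, E.sec_sec]
      simp [Nq, hb]
    · simp [Nq, h1, h2]

lemma SM_eq_AS : E.Sq * E.Mq = E.Aq * E.Sq := by
  unfold Sq Mq Aq
  rw [Matrix.mul_sub, Matrix.sub_mul, Matrix.mul_one, Matrix.one_mul]
  congr 1
  rw [Matrix.mul_smul, Matrix.smul_mul]
  congr 1
  rw [← Matrix.map_mul, ← Matrix.map_mul, E.key_intertwine]

lemma row_one_add_N (h' : E.X.H) (b : E.Y.H) : (1 + E.Nq) (E.sec h') b = E.Sq h' b := by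
  simp only [Matrix.add_apply, Matrix.one_apply, Nq, Sq, S0, Matrix.map_apply, Matrix.of_apply]
  by_cases h1 : E.sec (E.πH b) = b
  · rw [if_pos h1, add_zero]
    by_cases h2 : E.πH b = h'
    · rw [if_pos h2, if_pos (show E.sec h' = b by rw [← h2]; exact h1)]
      simp
    · rw [if_neg h2, if_neg (fun he => h2 (by rw [← he, E.sec_sec]))]
      simp
  · rw [if_neg h1]
    have hnot : ¬ (E.sec h' = b) := fun he => h1 (by rw [← he, E.sec_sec])
    rw [if_neg hnot, zero_add]
    by_cases h2 : E.sec h' = E.sec (E.πH b)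
    · rw [if_pos h2, if_pos (E.sec_inj h2).symm]
      simp
    · rw [if_neg h2, if_neg (fun he => h2 (by rw [he]))]
      simp
  done

lemma S_sub_SN (h : E.X.H) (f : E.Y.H) :
    (E.Sq - E.Sq * E.Nq) h f = if f = E.sec h then 1 else 0 := by
  rw [Matrix.sub_apply, Matrix.mul_apply]
  by_cases hf : E.sec (E.πH f) = f
  · have hz : ∀ b ∈ Finset.univ, E.Sq h b * E.Nq b f = 0 := by
      intro b _; simp [Nq, hf]
    rw [Finset.sum_eq_zero hz, sub_zero]
    simp only [Sq, S0, Matrix.map_apply, Matrix.of_apply]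
    by_cases h2 : E.πH f = h
    · rw [if_pos h2, if_pos (show f = E.sec h by rw [← h2]; exact hf.symm)]
      simp
    · rw [if_neg h2, if_neg (fun he => h2 (by rw [he, E.sec_sec]))]
      simp
  · have hc : ∀ b ∈ Finset.univ, E.Sq h b * E.Nq b f
        = if b = E.sec (E.πH f) then E.Sq h b else 0 := by
      intro b _
      simp only [Nq, Matrix.of_apply, if_neg hf, mul_ite, mul_one, mul_zero]
    rw [Finset.sum_congr rfl hc, Finset.sum_ite_eq' Finset.univ]
    simp only [Finset.mem_univ, if_true]
    have h3 : E.Sq h (E.sec (E.πH f)) = E.Sq h f := by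
      simp [Sq, S0, E.sec_sec]
    rw [h3, sub_self, if_neg (fun he => hf (by rw [he, E.sec_sec]))]

lemma Mp_row (h' : E.X.H) (f : E.Y.H) :
    ((1 + E.Nq) * (E.Mq * (1 - E.Nq))) (E.sec h') f
      = ∑ h'' : E.X.H, E.Aq h' h'' * (if f = E.sec h'' then 1 else 0) := by
  rw [Matrix.mul_apply]
  have h1 : ∀ b ∈ Finset.univ, (1 + E.Nq) (E.sec h') b * (E.Mq * (1 - E.Nq)) b f
      = E.Sq h' b * (E.Mq * (1 - E.Nq)) b f := by
    intro b _; rw [E.row_one_add_N]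
  rw [Finset.sum_congr rfl h1, ← Matrix.mul_apply]
  have hS : E.Sq * (E.Mq * (1 - E.Nq)) = E.Aq * (E.Sq - E.Sq * E.Nq) := by
    rw [← Matrix.mul_assoc, E.SM_eq_AS, Matrix.mul_assoc, Matrix.mul_sub, Matrix.mul_one]
  rw [hS, Matrix.mul_apply]
  exact Finset.sum_congr rfl fun h'' _ => by rw [E.S_sub_SN]

lemma Mp_RR (h' h : E.X.H) :
    ((1 + E.Nq) * (E.Mq * (1 - E.Nq))) (E.sec h') (E.sec h) = E.Aq h' h := by
  rw [E.Mp_row]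
  have h1 : ∀ h'' ∈ Finset.univ, E.Aq h' h'' * (if E.sec h = E.sec h'' then (1 : Polynomial ℤ) else 0)
      = if h'' = h then E.Aq h' h'' else 0 := by
    intro h'' _
    by_cases he : h'' = h
    · rw [if_pos he, if_pos (by rw [he]), mul_one]
    · rw [if_neg he, if_neg (fun hs => he (E.sec_inj hs).symm), mul_zero]
  rw [Finset.sum_congr rfl h1, Finset.sum_ite_eq' Finset.univ]
  simp

lemma Mp_RK (h' : E.X.H) (f : E.Y.H) (hf : E.sec (E.πH f) ≠ f) :
    ((1 + E.Nq) * (E.Mq * (1 - E.Nq))) (E.sec h') f = 0 := by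
  rw [E.Mp_row]
  apply Finset.sum_eq_zero
  intro h'' _
  rw [if_neg (fun he => hf (by rw [he, E.sec_sec])), mul_zero]


noncomputable def eqv : E.X.H ⊕ {f : E.Y.H // E.sec (E.πH f) ≠ f} ≃ E.Y.H :=
  Equiv.ofBijective (Sum.elim E.sec Subtype.val) (by
    constructor
    · rintro (h1 | k1) (h2 | k2) he
      · simp only [Sum.elim_inl] at he
        exact congrArg Sum.inl (E.sec_inj he)
      · simp only [Sum.elim_inl, Sum.elim_inr] at he
        exact absurd (by rw [← he, E.sec_sec]) k2.2
      · simp only [Sum.elim_inl, Sum.elim_inr] at he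
        exact absurd (by rw [he, E.sec_sec]) k1.2
      · simp only [Sum.elim_inr] at he
        exact congrArg Sum.inr (Subtype.ext he)
    · intro f
      by_cases hf : E.sec (E.πH f) = f
      · exact ⟨Sum.inl (E.πH f), hf⟩
      · exact ⟨Sum.inr ⟨f, hf⟩, rfl⟩)

end EdgeFreeCover


/-- For an edge-free action of `G` on a finite graph `Y` with quotient
graph of groups `𝕏 = Y ⫽ G`, the zeta function `ζ(u,𝕏)` divides `ζ(u,Y)`;
equivalently, the polynomial `ζ(u,𝕏)⁻¹ = det(I - W_𝕏 u)` divides the polynomial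
`ζ(u,Y)⁻¹ = det(I - W_Y u)`. -/
theorem zeta_quotient_divides (E : EdgeFreeCover) :
    Matrix.det (1 - (X : Polynomial ℤ) • (E.Wquot.map Polynomial.C)) ∣
    Matrix.det (1 - (X : Polynomial ℤ) • (E.WY.map Polynomial.C)) := by
  show E.Aq.det ∣ E.Mq.det
  have hNN : (1 + E.Nq) * (1 - E.Nq) = 1 := by
    rw [mul_sub, mul_one, add_mul, one_mul, E.Nq_sq, add_zero, add_sub_cancel_right]
  set Mp := (1 + E.Nq) * (E.Mq * (1 - E.Nq)) with hMp
  have hdet : Mp.det = E.Mq.det := by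
    rw [hMp, Matrix.det_mul, Matrix.det_mul]
    calc (1 + E.Nq).det * (E.Mq.det * (1 - E.Nq).det)
        = E.Mq.det * ((1 + E.Nq) * (1 - E.Nq)).det := by rw [Matrix.det_mul]; ring
      _ = E.Mq.det := by rw [hNN, Matrix.det_one, mul_one]
  set Cblk : Matrix {f : E.Y.H // E.sec (E.πH f) ≠ f} E.X.H (Polynomial ℤ) :=
    Matrix.of fun k h => Mp k.val (E.sec h) with hC
  set Dblk : Matrix {f : E.Y.H // E.sec (E.πH f) ≠ f} {f : E.Y.H // E.sec (E.πH f) ≠ f}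
      (Polynomial ℤ) := Matrix.of fun k k' => Mp k.val k'.val with hD
  have hsub : Mp.submatrix E.eqv E.eqv = Matrix.fromBlocks E.Aq 0 Cblk Dblk := by
    refine Matrix.ext ?_
    rintro (h' | k) (h | k')
    · exact E.Mp_RR h' h
    · exact E.Mp_RK h' k'.val k'.2
    · rfl
    · rfl
  have hblk : Mp.det = E.Aq.det * Dblk.det := by
    rw [← Matrix.det_submatrix_equiv_self E.eqv Mp, hsub, Matrix.det_fromBlocks_zero₁₂]
  exact ⟨Dblk.det, by rw [← hdet, hblk]⟩
end
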